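/- For a σ-Dedekind complete Banach lattice E with the wDP* property, every continuous linear operator T : E → c₀ is almost Dunford-Pettis. -/

import Mathlib

open Filter Topology

section Defs

variable {E : Type*} [NormedAddCommGroup E] [Lattice E] [HasSolidNorm E] [IsOrderedAddMonoid E] [NormedSpace ℝ E]

/-- The value of the modulus `|f|` of a functional at a positive element `x`:
`|f|(x) = sup { f y : |y| ≤ x }`. -/
noncomputable def absVal (f : E →L[ℝ] ℝ) (x : E) : ℝ :=
  sSup ((fun y => f y) '' {y | |y| ≤ x})

/-- The value of the positive part `f⁺` of a functional at a positive element `x`: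
`f⁺(x) = sup { f y : 0 ≤ y ≤ x }`. -/
noncomputable def posVal (f : E →L[ℝ] ℝ) (x : E) : ℝ :=
  sSup ((fun y => f y) '' {y | 0 ≤ y ∧ y ≤ x})

/-- The value of `|f|` at an arbitrary `x`, via `x = x⁺ - x⁻`. -/
noncomputable def absValF (f : E →L[ℝ] ℝ) (x : E) : ℝ :=
  absVal f (x ⊔ 0) - absVal f (-x ⊔ 0)

/-- The value of `f⁺` at an arbitrary `x`, via `x = x⁺ - x⁻`. -/
noncomputable def posValF (f : E →L[ℝ] ℝ) (x : E) : ℝ :=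
  posVal f (x ⊔ 0) - posVal f (-x ⊔ 0)

/-- The value of `f⁻ = (-f)⁺` at an arbitrary `x`. -/
noncomputable def negValF (f : E →L[ℝ] ℝ) (x : E) : ℝ :=
  posValF (-f) x

/-- `f ≤ g` in the dual order: `f x ≤ g x` for all `x ≥ 0`. -/
def FunLe (f g : E →L[ℝ] ℝ) : Prop := ∀ x : E, 0 ≤ x → f x ≤ g x

/-- `|f| ≤ |g|` in the dual order. -/
def FunAbsLe (f g : E →L[ℝ] ℝ) : Prop := ∀ x : E, 0 ≤ x → absVal f x ≤ absVal g x

/-- Disjointness of two functionals: `(|f| ∧ |g|)(x) = 0` for all `x ≥ 0`, where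
`(|f| ∧ |g|)(x) = inf { |f|(y) + |g|(x - y) : 0 ≤ y ≤ x }` (Riesz–Kantorovich). -/
def FunDisjoint (f g : E →L[ℝ] ℝ) : Prop :=
  ∀ x : E, 0 ≤ x →
    sInf ((fun y => absVal f y + absVal g (x - y)) '' {y | 0 ≤ y ∧ y ≤ x}) = 0

/-- A sequence of functionals is weak*-null. -/
def WeakStarNull (f : ℕ → E →L[ℝ] ℝ) : Prop :=
  ∀ x : E, Tendsto (fun n => f n x) atTop (𝓝 0)

/-- A sequence in `E` is weakly null. -/
def WeaklyNull (x : ℕ → E) : Prop :=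
  ∀ f : E →L[ℝ] ℝ, Tendsto (fun n => f (x n)) atTop (𝓝 0)

/-- A sequence of functionals is weakly null (i.e. null for `σ(E*, E**)`). -/
def WeaklyNullDual (f : ℕ → E →L[ℝ] ℝ) : Prop :=
  ∀ Φ : (E →L[ℝ] ℝ) →L[ℝ] ℝ, Tendsto (fun n => Φ (f n)) atTop (𝓝 0)

/-- Disjointness of two elements of a Banach lattice. -/
def ElemDisjoint (x y : E) : Prop := |x| ⊓ |y| = 0

/-- A set is almost limited: it is norm bounded and every disjoint weak*-null sequence of
functionals converges uniformly to zero on it. -/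
def AlmostLimited (A : Set E) : Prop :=
  Bornology.IsBounded A ∧
    ∀ f : ℕ → E →L[ℝ] ℝ, Pairwise (fun m n => FunDisjoint (f m) (f n)) → WeakStarNull f →
      ∀ ε > 0, ∀ᶠ n in atTop, ∀ x ∈ A, |f n x| < ε

/-- A set is limited: it is norm bounded and every weak*-null sequence of functionals
converges uniformly to zero on it. -/
def LimitedSet (A : Set E) : Prop :=
  Bornology.IsBounded A ∧
    ∀ f : ℕ → E →L[ℝ] ℝ, WeakStarNull f →
      ∀ ε > 0, ∀ᶠ n in atTop, ∀ x ∈ A, |f n x| < ε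

/-- A set is almost Dunford–Pettis: it is norm bounded and every disjoint weakly null
sequence of functionals converges uniformly to zero on it. -/
def AlmostDPSet (A : Set E) : Prop :=
  Bornology.IsBounded A ∧
    ∀ f : ℕ → E →L[ℝ] ℝ, Pairwise (fun m n => FunDisjoint (f m) (f n)) → WeaklyNullDual f →
      ∀ ε > 0, ∀ᶠ n in atTop, ∀ x ∈ A, |f n x| < ε

/-- The solid hull of a set. -/
def SolidHull (A : Set E) : Set E := {y | ∃ x ∈ A, |y| ≤ |x|}

/-- A set is L-weakly compact: norm bounded, and every disjoint sequence in its solid hull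
is norm null. -/
def LWeaklyCompact (A : Set E) : Prop :=
  Bornology.IsBounded A ∧
    ∀ x : ℕ → E, (∀ n, x n ∈ SolidHull A) → Pairwise (fun m n => ElemDisjoint (x m) (x n)) →
      Tendsto (fun n => ‖x n‖) atTop (𝓝 0)

/-- A set `B ⊆ E*` is an almost L-set: norm bounded, and every disjoint weakly null sequence
of `E` converges uniformly to zero on `B`. -/
def AlmostLSet (B : Set (E →L[ℝ] ℝ)) : Prop :=
  Bornology.IsBounded B ∧
    ∀ x : ℕ → E, Pairwise (fun m n => ElemDisjoint (x m) (x n)) → WeaklyNull x →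
      ∀ ε > 0, ∀ᶠ n in atTop, ∀ f ∈ B, |f (x n)| < ε

/-- The solid hull of a set of functionals, using the dual order. -/
def DualSolidHull (B : Set (E →L[ℝ] ℝ)) : Set (E →L[ℝ] ℝ) :=
  {g | ∃ f ∈ B, FunAbsLe g f}

/-- A set `B ⊆ E*` is L-weakly compact: norm bounded, and every disjoint sequence in its
solid hull is norm null. -/
def DualLWeaklyCompact (B : Set (E →L[ℝ] ℝ)) : Prop :=
  Bornology.IsBounded B ∧
    ∀ g : ℕ → E →L[ℝ] ℝ, (∀ n, g n ∈ DualSolidHull B) →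
      Pairwise (fun m n => FunDisjoint (g m) (g n)) →
        Tendsto (fun n => ‖g n‖) atTop (𝓝 0)

end Defs

/-- A Banach lattice is σ-Dedekind complete: every (countable) sequence bounded above has a
supremum. -/
def SigmaDedekindComplete (E : Type*) [NormedAddCommGroup E] [Lattice E] [HasSolidNorm E] [IsOrderedAddMonoid E] : Prop :=
  ∀ s : ℕ → E, (∃ b, ∀ n, s n ≤ b) → ∃ a, IsLUB (Set.range s) a

/-- The norm of `E` is order continuous: if a downward directed set has infimum `0`, then it
contains elements of arbitrarily small norm. -/
def OrderContinuousNorm (E : Type*) [NormedAddCommGroup E] [Lattice E] [HasSolidNorm E] [IsOrderedAddMonoid E] : Prop :=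
  ∀ A : Set E, A.Nonempty → DirectedOn (· ≥ ·) A → IsGLB A 0 →
    ∀ ε > 0, ∃ a ∈ A, ‖a‖ < ε

/-- The norm of `E*` is order continuous (with the dual order spelled out): if a nonempty
family of functionals is downward directed, consists of positive functionals, and `0` is its
greatest lower bound, then it contains functionals of arbitrarily small norm. -/
def DualOrderContinuousNorm (E : Type*) [NormedAddCommGroup E] [Lattice E] [HasSolidNorm E] [IsOrderedAddMonoid E] [NormedSpace ℝ E] :
    Prop :=
  ∀ A : Set (E →L[ℝ] ℝ), A.Nonempty →
    (∀ f ∈ A, ∀ g ∈ A, ∃ h ∈ A, FunLe h f ∧ FunLe h g) →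
    (∀ f ∈ A, FunLe 0 f) →
    (∀ g, (∀ f ∈ A, FunLe g f) → FunLe g 0) →
    ∀ ε > 0, ∃ f ∈ A, ‖f‖ < ε

/-- `E` has the weak Dunford–Pettis* property: `f n (x n) → 0` for every weakly null
sequence `(x n)` in `E` and every disjoint weak*-null sequence `(f n)` in `E*`. -/
def WDPStar (E : Type*) [NormedAddCommGroup E] [Lattice E] [HasSolidNorm E] [IsOrderedAddMonoid E] [NormedSpace ℝ E] : Prop :=
  ∀ (x : ℕ → E) (f : ℕ → E →L[ℝ] ℝ), WeaklyNull x →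
    Pairwise (fun m n => FunDisjoint (f m) (f n)) → WeakStarNull f →
      Tendsto (fun n => f n (x n)) atTop (𝓝 0)

/-- `E` has the positive Schur property: every weakly null sequence of positive elements is
norm null. -/
def PositiveSchur (E : Type*) [NormedAddCommGroup E] [Lattice E] [HasSolidNorm E] [IsOrderedAddMonoid E] [NormedSpace ℝ E] : Prop :=
  ∀ x : ℕ → E, (∀ n, 0 ≤ x n) → WeaklyNull x → Tendsto (fun n => ‖x n‖) atTop (𝓝 0)

/-- A set is relatively weakly compact if the weak closure of its image in the weak space is
compact. -/
def RelWeaklyCompact {E : Type*} [NormedAddCommGroup E] [Lattice E] [HasSolidNorm E] [IsOrderedAddMonoid E] [NormedSpace ℝ E]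
    (W : Set E) : Prop :=
  IsCompact (closure ((toWeakSpace ℝ E) '' W))

section St15Aux

open Set

variable {E : Type*} [NormedAddCommGroup E] [Lattice E] [HasSolidNorm E] [IsOrderedAddMonoid E] [NormedSpace ℝ E]

/-! ### Elementary lattice group lemmas -/

lemma st15_pos_sub_neg (a : E) : (a ⊔ 0) - (-a ⊔ 0) = a := by
  have h1 : -(-a ⊔ 0) = a ⊓ 0 := by rw [neg_sup, neg_neg, neg_zero]
  have h2 : (a ⊔ 0) - (-a ⊔ 0) = (a ⊔ 0) + (a ⊓ 0) := by rw [sub_eq_add_neg, h1]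
  rw [h2, add_comm, inf_add_sup, add_zero]

lemma st15_pos_le_abs (a : E) : a ⊔ 0 ≤ |a| := sup_le (le_abs_self a) (abs_nonneg a)

lemma st15_neg_le_abs (a : E) : -a ⊔ 0 ≤ |a| := sup_le (neg_le_abs a) (abs_nonneg a)

lemma st15_key_ineq {b s a : E} (h : s ≤ a) : b ⊓ a ≤ (b ⊓ s) + (a - s) := by
  rw [← sub_le_iff_le_add, inf_sub]
  refine le_inf (inf_le_left.trans (sub_le_self b (sub_nonneg.mpr h))) ?_
  exact le_trans inf_le_right (by rw [sub_sub_cancel])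

lemma st15_inf_add {a b c : E} (ha : 0 ≤ a) (hb : 0 ≤ b) (hc : 0 ≤ c) :
    a ⊓ (b + c) ≤ a ⊓ b + a ⊓ c := by
  set d := a ⊓ (b + c) with hd
  have h1 : d - (a ⊓ b) = (d - a) ⊔ (d - b) := by rw [sub_inf]
  have h2 : d - a ≤ a ⊓ c := le_trans (sub_nonpos.mpr inf_le_left) (le_inf ha hc)
  have h3 : d - b ≤ a ⊓ c := by
    refine le_inf ?_ ?_
    · rw [sub_le_iff_le_add]
      exact le_trans inf_le_left (le_add_of_nonneg_right hb)
    · rw [sub_le_iff_le_add, add_comm]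
      exact inf_le_right
  have h4 : d - (a ⊓ b) ≤ a ⊓ c := by rw [h1]; exact sup_le h2 h3
  rw [sub_le_iff_le_add] at h4
  rwa [add_comm (a ⊓ b)]

lemma st15_inf_nsmul {a b : E} (ha : 0 ≤ a) (hb : 0 ≤ b) :
    ∀ m : ℕ, a ⊓ (m • b) ≤ m • (a ⊓ b) := by
  intro m
  induction m with
  | zero => simpa using inf_le_right
  | succ m ih =>
    have h1 : a ⊓ ((m + 1) • b) = a ⊓ (m • b + b) := by rw [succ_nsmul]
    calc a ⊓ ((m + 1) • b) = a ⊓ (m • b + b) := h1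
      _ ≤ a ⊓ (m • b) + a ⊓ b := st15_inf_add ha (nsmul_nonneg hb m) hb
      _ ≤ m • (a ⊓ b) + a ⊓ b := by exact add_le_add_left ih _
      _ = (m + 1) • (a ⊓ b) := (succ_nsmul _ _).symm

lemma st15_abs_sub_le_sup {u v : E} (hu : 0 ≤ u) (hv : 0 ≤ v) : |u - v| ≤ u ⊔ v := by
  rw [abs_le']
  constructor
  · exact le_trans (sub_le_self _ hv) le_sup_left
  · rw [neg_sub]; exact le_trans (sub_le_self _ hu) le_sup_right

lemma st15_disj_sum {b : E} (hb : 0 ≤ b) (F : Finset ℕ) (a : ℕ → E)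
    (h0 : ∀ i, 0 ≤ a i) (hd : ∀ i ∈ F, b ⊓ a i = 0) :
    b ⊓ (∑ i ∈ F, a i) = 0 := by
  classical
  induction F using Finset.induction_on with
  | empty => simp only [Finset.sum_empty]; exact inf_eq_right.mpr hb
  | @insert j F' hj ih =>
    rw [Finset.sum_insert hj]
    have hsum : 0 ≤ ∑ i ∈ F', a i := Finset.sum_nonneg fun i _ => h0 i
    have h5 : b ⊓ (a j + ∑ i ∈ F', a i) ≤ b ⊓ a j + b ⊓ (∑ i ∈ F', a i) :=
      st15_inf_add hb (h0 j) hsum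
    rw [hd j (Finset.mem_insert_self j F'), ih fun i hi => hd i (Finset.mem_insert_of_mem hi),
      add_zero] at h5
    exact le_antisymm h5 (le_inf hb (add_nonneg (h0 j) hsum))

lemma st15_sum_le {w : E} (hw : 0 ≤ w) (F : Finset ℕ) (a : ℕ → E)
    (h0 : ∀ i, 0 ≤ a i) (hd : ∀ i j, i ≠ j → a i ⊓ a j = 0) (hb : ∀ i, a i ≤ w) :
    ∑ i ∈ F, a i ≤ w := by
  classical
  induction F using Finset.induction_on with
  | empty => simpa using hw
  | @insert j F' hj ih =>
    rw [Finset.sum_insert hj]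
    have hdisj : a j ⊓ (∑ i ∈ F', a i) = 0 := by
      refine st15_disj_sum (h0 j) F' a h0 fun i hi => hd j i ?_
      rintro rfl; exact hj hi
    have : a j + ∑ i ∈ F', a i = a j ⊓ (∑ i ∈ F', a i) + (a j ⊔ ∑ i ∈ F', a i) :=
      (inf_add_sup _ _).symm
    rw [this, hdisj, zero_add]
    exact sup_le (hb j) ih

/-! ### IsLUB lemmas -/

lemma st15_isLUB_add {s t : ℕ → E} {a b : E} (hs : Monotone s) (ht : Monotone t)
    (ha : IsLUB (range s) a) (hb : IsLUB (range t) b) :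
    IsLUB (range fun n => s n + t n) (a + b) := by
  constructor
  · rintro _ ⟨n, rfl⟩
    exact add_le_add (ha.1 ⟨n, rfl⟩) (hb.1 ⟨n, rfl⟩)
  · intro c hc
    have step : ∀ n m, s n + t m ≤ c := by
      intro n m
      calc s n + t m ≤ s (max n m) + t (max n m) :=
            add_le_add (hs (le_max_left _ _)) (ht (le_max_right _ _))
        _ ≤ c := hc ⟨max n m, rfl⟩
    have h1 : ∀ m, a ≤ c - t m := by
      intro m
      refine ha.2 ?_
      rintro _ ⟨n, rfl⟩
      rw [le_sub_iff_add_le]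
      exact step n m
    have h2 : b ≤ c - a := by
      refine hb.2 ?_
      rintro _ ⟨m, rfl⟩
      rw [le_sub_iff_add_le, add_comm]
      rw [← le_sub_iff_add_le]
      exact h1 m
    rw [le_sub_iff_add_le, add_comm] at h2
    exact h2

lemma st15_isLUB_inf_zero {s : ℕ → E} {a b : E} (ha : IsLUB (range s) a)
    (h0 : ∀ n, s n ⊓ b = 0) (hbn : 0 ≤ b) (ha0 : 0 ≤ a) : a ⊓ b = 0 := by
  have key : ∀ n, b ⊓ a ≤ a - s n := by
    intro n
    have h1 : b ⊓ a ≤ (b ⊓ s n) + (a - s n) := st15_key_ineq (ha.1 ⟨n, rfl⟩)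
    rwa [inf_comm b (s n), h0 n, zero_add] at h1
  have h2 : ∀ n, s n ≤ a - b ⊓ a := by
    intro n
    have hkey := le_sub_iff_add_le.mp (key n)
    rw [le_sub_iff_add_le, add_comm]
    exact hkey
  have h3 : a ≤ a - b ⊓ a := ha.2 (by rintro _ ⟨n, rfl⟩; exact h2 n)
  have h4 : b ⊓ a ≤ 0 := by
    have := le_sub_iff_add_le.mp h3
    rwa [add_le_iff_nonpos_right] at this
  rw [inf_comm]
  exact le_antisymm h4 (le_inf hbn ha0)

/-! ### Countable suprema via σ-Dedekind completeness -/

noncomputable def st15_slub (hσ : SigmaDedekindComplete E) (s : ℕ → E)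
    (hb : ∃ b, ∀ n, s n ≤ b) : E :=
  (hσ s hb).choose

lemma st15_slub_isLUB (hσ : SigmaDedekindComplete E) (s : ℕ → E) (hb : ∃ b, ∀ n, s n ≤ b) :
    IsLUB (range s) (st15_slub hσ s hb) :=
  (hσ s hb).choose_spec

lemma st15_le_slub (hσ : SigmaDedekindComplete E) (s : ℕ → E) (hb : ∃ b, ∀ n, s n ≤ b)
    (n : ℕ) : s n ≤ st15_slub hσ s hb :=
  (st15_slub_isLUB hσ s hb).1 ⟨n, rfl⟩

lemma st15_slub_le (hσ : SigmaDedekindComplete E) (s : ℕ → E) (hb : ∃ b, ∀ n, s n ≤ b)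
    {c : E} (hc : ∀ n, s n ≤ c) : st15_slub hσ s hb ≤ c :=
  (st15_slub_isLUB hσ s hb).2 (by rintro _ ⟨n, rfl⟩; exact hc n)

/-! ### Band projections -/

noncomputable def st15_Q (hσ : SigmaDedekindComplete E) (w u : E) : E :=
  st15_slub hσ (fun m : ℕ => u ⊓ m • w) ⟨u, fun _ => inf_le_left⟩

lemma st15_Q_isLUB (hσ : SigmaDedekindComplete E) (w u : E) :
    IsLUB (range fun m : ℕ => u ⊓ m • w) (st15_Q hσ w u) :=
  st15_slub_isLUB hσ _ _

lemma st15_le_Q (hσ : SigmaDedekindComplete E) (w u : E) (m : ℕ) :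
    u ⊓ m • w ≤ st15_Q hσ w u :=
  (st15_Q_isLUB hσ w u).1 ⟨m, rfl⟩

lemma st15_Q_le (hσ : SigmaDedekindComplete E) (w u : E) {c : E}
    (hc : ∀ m : ℕ, u ⊓ m • w ≤ c) : st15_Q hσ w u ≤ c :=
  (st15_Q_isLUB hσ w u).2 (by rintro _ ⟨m, rfl⟩; exact hc m)

lemma st15_Q_le_self (hσ : SigmaDedekindComplete E) (w u : E) : st15_Q hσ w u ≤ u :=
  st15_Q_le hσ w u fun _ => inf_le_left

lemma st15_Q_nonneg (hσ : SigmaDedekindComplete E) (w : E) {u : E} (hu : 0 ≤ u) :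
    0 ≤ st15_Q hσ w u := by
  have h0 : u ⊓ (0 : ℕ) • w = 0 := by
    rw [zero_smul]
    exact inf_eq_right.mpr hu
  have := st15_le_Q hσ w u 0
  rwa [h0] at this

lemma st15_Q_mono (hσ : SigmaDedekindComplete E) (w : E) {u v : E} (h : u ≤ v) :
    st15_Q hσ w u ≤ st15_Q hσ w v :=
  st15_Q_le hσ w u fun m => le_trans (inf_le_inf_right _ h) (st15_le_Q hσ w v m)

lemma st15_Q_add (hσ : SigmaDedekindComplete E) {w u v : E} (hw : 0 ≤ w) (hu : 0 ≤ u)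
    (hv : 0 ≤ v) : st15_Q hσ w (u + v) = st15_Q hσ w u + st15_Q hσ w v := by
  refine (st15_Q_isLUB hσ w (u + v)).unique ?_
  constructor
  · rintro _ ⟨m, rfl⟩
    have h1 : (u + v) ⊓ m • w ≤ u ⊓ m • w + v ⊓ m • w := by
      rw [inf_comm (u + v), inf_comm u, inf_comm v]
      exact st15_inf_add (nsmul_nonneg hw m) hu hv
    exact h1.trans (add_le_add (st15_le_Q hσ w u m) (st15_le_Q hσ w v m))
  · intro c hc
    have step : ∀ m m' : ℕ, u ⊓ m • w + v ⊓ m' • w ≤ c := by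
      intro m m'
      set M := max m m' with hM
      have h1 : u ⊓ m • w ≤ u ⊓ M • w :=
        inf_le_inf_left u (nsmul_le_nsmul_left hw (le_max_left _ _))
      have h2 : v ⊓ m' • w ≤ v ⊓ M • w :=
        inf_le_inf_left v (nsmul_le_nsmul_left hw (le_max_right _ _))
      have h3 : u ⊓ M • w + v ⊓ M • w ≤ (u + v) ⊓ ((M + M) • w) := by
        refine le_inf (add_le_add inf_le_left inf_le_left) ?_
        rw [add_nsmul]
        exact add_le_add inf_le_right inf_le_right
      calc u ⊓ m • w + v ⊓ m' • w ≤ u ⊓ M • w + v ⊓ M • w := add_le_add h1 h2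
        _ ≤ (u + v) ⊓ ((M + M) • w) := h3
        _ ≤ c := hc ⟨M + M, rfl⟩
    have h1 : ∀ m' : ℕ, st15_Q hσ w u ≤ c - v ⊓ m' • w := by
      intro m'
      refine st15_Q_le hσ w u fun m => ?_
      rw [le_sub_iff_add_le]
      exact step m m'
    have h2 : st15_Q hσ w v ≤ c - st15_Q hσ w u := by
      refine st15_Q_le hσ w v fun m' => ?_
      have := le_sub_iff_add_le.mp (h1 m')
      rw [le_sub_iff_add_le, add_comm]
      exact this
    have := le_sub_iff_add_le.mp h2
    rwa [add_comm] at this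

lemma st15_Q_eq_self (hσ : SigmaDedekindComplete E) {w u : E} (h : u ≤ w) :
    st15_Q hσ w u = u := by
  refine le_antisymm (st15_Q_le_self hσ w u) ?_
  have h1 : u ⊓ (1 : ℕ) • w = u := by rw [one_smul]; exact inf_eq_left.mpr h
  have := st15_le_Q hσ w u 1
  rwa [h1] at this

lemma st15_Q_idem (hσ : SigmaDedekindComplete E) (w u : E) :
    st15_Q hσ w (st15_Q hσ w u) = st15_Q hσ w u := by
  refine le_antisymm (st15_Q_le_self hσ w _) ?_
  refine st15_Q_le hσ w u fun m => ?_
  have h1 : u ⊓ m • w ≤ st15_Q hσ w u ⊓ m • w :=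
    le_inf (st15_le_Q hσ w u m) inf_le_right
  exact h1.trans (st15_le_Q hσ w _ m)

lemma st15_Q_disj0 (hσ : SigmaDedekindComplete E) {w u : E} (hw : 0 ≤ w) (hu : 0 ≤ u)
    (hd : u ⊓ w = 0) : st15_Q hσ w u = 0 := by
  refine le_antisymm (st15_Q_le hσ w u fun m => ?_) (st15_Q_nonneg hσ w hu)
  calc u ⊓ m • w ≤ m • (u ⊓ w) := st15_inf_nsmul hu hw m
    _ = 0 := by rw [hd, smul_zero]

lemma st15_Q_inf_w' (hσ : SigmaDedekindComplete E) {w w' u : E} (hw : 0 ≤ w) (hw' : 0 ≤ w')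
    (hu : 0 ≤ u) (hww' : w ⊓ w' = 0) : st15_Q hσ w u ⊓ w' = 0 := by
  refine st15_isLUB_inf_zero (st15_Q_isLUB hσ w u) (fun m => ?_) hw' (st15_Q_nonneg hσ w hu)
  have h1 : u ⊓ m • w ⊓ w' ≤ m • (w' ⊓ w) := by
    refine le_trans (inf_le_inf_right w' inf_le_right) ?_
    rw [inf_comm (m • w) w']
    exact st15_inf_nsmul hw' hw m
  have hww'2 : w' ⊓ w = 0 := by rw [inf_comm]; exact hww'
  rw [hww'2, smul_zero] at h1
  exact le_antisymm h1 (le_inf (le_inf hu (nsmul_nonneg hw m)) hw')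

lemma st15_Q_inf_Q (hσ : SigmaDedekindComplete E) {w w' u u' : E} (hw : 0 ≤ w) (hw' : 0 ≤ w')
    (hu : 0 ≤ u) (hu' : 0 ≤ u') (hww' : w ⊓ w' = 0) :
    st15_Q hσ w u ⊓ st15_Q hσ w' u' = 0 := by
  rw [inf_comm]
  refine st15_isLUB_inf_zero (st15_Q_isLUB hσ w' u') (fun m => ?_) (st15_Q_nonneg hσ w hu)
    (st15_Q_nonneg hσ w' hu')
  have h1 : u' ⊓ m • w' ⊓ st15_Q hσ w u ≤ m • (st15_Q hσ w u ⊓ w') := by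
    refine le_trans (inf_le_inf_right _ inf_le_right) ?_
    rw [inf_comm (m • w') (st15_Q hσ w u)]
    exact st15_inf_nsmul (st15_Q_nonneg hσ w hu) hw' m
  rw [st15_Q_inf_w' hσ hw hw' hu hww', smul_zero] at h1
  exact le_antisymm h1
    (le_inf (le_inf hu' (nsmul_nonneg hw' m)) (st15_Q_nonneg hσ w hu))

lemma st15_Q_QQ_zero (hσ : SigmaDedekindComplete E) {w w' u : E} (hw : 0 ≤ w) (hw' : 0 ≤ w')
    (hu : 0 ≤ u) (hww' : w ⊓ w' = 0) : st15_Q hσ w' (st15_Q hσ w u) = 0 :=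
  st15_Q_disj0 hσ hw' (st15_Q_nonneg hσ w hu) (st15_Q_inf_w' hσ hw hw' hu hww')

lemma st15_Q_comp_zero (hσ : SigmaDedekindComplete E) {w x : E} (hw : 0 ≤ w) (hx : 0 ≤ x) :
    st15_Q hσ w (x - st15_Q hσ w x) = 0 := by
  have h1 : 0 ≤ x - st15_Q hσ w x := sub_nonneg.mpr (st15_Q_le_self hσ w x)
  have h2 := st15_Q_add hσ hw h1 (st15_Q_nonneg hσ w hx)
  rw [sub_add_cancel, st15_Q_idem] at h2
  have h3 : st15_Q hσ w x = st15_Q hσ w (x - st15_Q hσ w x) + st15_Q hσ w x := h2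
  nth_rewrite 1 [← zero_add (st15_Q hσ w x)] at h3
  exact (add_right_cancel h3.symm)

noncomputable def st15_P (hσ : SigmaDedekindComplete E) (w u : E) : E :=
  st15_Q hσ w (u ⊔ 0) - st15_Q hσ w (-u ⊔ 0)

lemma st15_P_add (hσ : SigmaDedekindComplete E) {w : E} (hw : 0 ≤ w) (u v : E) :
    st15_P hσ w (u + v) = st15_P hσ w u + st15_P hσ w v := by
  have e : ∀ a : E, a ⊔ 0 = a + (-a ⊔ 0) := fun a =>
    sub_eq_iff_eq_add.mp (st15_pos_sub_neg a)
  have pn : ∀ a : E, (0:E) ≤ a ⊔ 0 := fun a => le_sup_right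
  have nn : ∀ a : E, (0:E) ≤ -a ⊔ 0 := fun a => le_sup_right
  have hAB : ((u + v) ⊔ 0) + ((-u ⊔ 0) + (-v ⊔ 0)) = (-(u + v) ⊔ 0) + ((u ⊔ 0) + (v ⊔ 0)) := by
    rw [e (u + v), e u, e v]
    abel
  have hq := congrArg (st15_Q hσ w) hAB
  rw [st15_Q_add hσ hw (pn _) (add_nonneg (nn _) (nn _)),
    st15_Q_add hσ hw (nn u) (nn v),
    st15_Q_add hσ hw (nn _) (add_nonneg (pn _) (pn _)),
    st15_Q_add hσ hw (pn u) (pn v)] at hq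
  unfold st15_P
  have : st15_Q hσ w ((u+v) ⊔ 0) - st15_Q hσ w (-(u+v) ⊔ 0)
      = (st15_Q hσ w (u ⊔ 0) + st15_Q hσ w (v ⊔ 0))
        - (st15_Q hσ w (-u ⊔ 0) + st15_Q hσ w (-v ⊔ 0)) := by
    rw [sub_eq_sub_iff_add_eq_add]
    calc st15_Q hσ w ((u+v) ⊔ 0) + (st15_Q hσ w (-u ⊔ 0) + st15_Q hσ w (-v ⊔ 0)) 
        = st15_Q hσ w (-(u + v) ⊔ 0) + (st15_Q hσ w (u ⊔ 0) + st15_Q hσ w (v ⊔ 0)) := hq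
      _ = st15_Q hσ w (u ⊔ 0) + st15_Q hσ w (v ⊔ 0) + st15_Q hσ w (-(u+v) ⊔ 0) := by abel
  rw [this]
  abel

lemma st15_abs_P_le (hσ : SigmaDedekindComplete E) (w u : E) :
    |st15_P hσ w u| ≤ |u| := by
  have h1 : |st15_P hσ w u| ≤ st15_Q hσ w (u ⊔ 0) ⊔ st15_Q hσ w (-u ⊔ 0) :=
    st15_abs_sub_le_sup (st15_Q_nonneg hσ w le_sup_right) (st15_Q_nonneg hσ w le_sup_right)
  refine h1.trans (sup_le ?_ ?_)
  · exact (st15_Q_le_self hσ w _).trans (st15_pos_le_abs u)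
  · exact (st15_Q_le_self hσ w _).trans (st15_neg_le_abs u)

lemma st15_P_fix (hσ : SigmaDedekindComplete E) {w u : E} (h1 : u ⊔ 0 ≤ w)
    (h2 : -u ⊔ 0 ≤ w) : st15_P hσ w u = u := by
  unfold st15_P
  rw [st15_Q_eq_self hσ h1, st15_Q_eq_self hσ h2, st15_pos_sub_neg]

lemma st15_P_le_Qabs (hσ : SigmaDedekindComplete E) (w u : E) :
    |st15_P hσ w u| ≤ st15_Q hσ w |u| := by
  have h1 : |st15_P hσ w u| ≤ st15_Q hσ w (u ⊔ 0) ⊔ st15_Q hσ w (-u ⊔ 0) :=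
    st15_abs_sub_le_sup (st15_Q_nonneg hσ w le_sup_right) (st15_Q_nonneg hσ w le_sup_right)
  refine h1.trans (sup_le ?_ ?_)
  · exact st15_Q_mono hσ w (st15_pos_le_abs u)
  · exact st15_Q_mono hσ w (st15_neg_le_abs u)

lemma st15_P_zero (hσ : SigmaDedekindComplete E) {w z : E} (hw : 0 ≤ w)
    (h1 : st15_Q hσ w (z ⊔ 0) = 0) (h2 : st15_Q hσ w (-z ⊔ 0) = 0) :
    st15_P hσ w z = 0 := by
  unfold st15_P; rw [h1, h2, sub_zero]

noncomputable def st15_Pclm (hσ : SigmaDedekindComplete E) (w : E) (hw : 0 ≤ w) :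
    E →L[ℝ] E := by
  refine AddMonoidHom.toRealLinearMap (AddMonoidHom.mk' (st15_P hσ w) ?_) ?_
  · exact fun u v => st15_P_add hσ hw u v
  · have hadd : ∀ u v : E, st15_P hσ w (u + v) = st15_P hσ w u + st15_P hσ w v :=
      st15_P_add hσ hw
    have hlip : LipschitzWith 1 (st15_P hσ w) := by
      refine LipschitzWith.of_dist_le_mul fun u v => ?_
      rw [dist_eq_norm, dist_eq_norm, NNReal.coe_one, one_mul]
      have hsub : st15_P hσ w u - st15_P hσ w v = st15_P hσ w (u - v) := by
        have h := hadd (u - v) v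
        rw [sub_add_cancel] at h
        rw [h]; abel
      rw [hsub]
      exact norm_le_norm_of_abs_le_abs (st15_abs_P_le hσ w (u - v))
    exact hlip.continuous

lemma st15_Pclm_apply (hσ : SigmaDedekindComplete E) (w : E) (hw : 0 ≤ w) (u : E) :
    st15_Pclm hσ w hw u = st15_P hσ w u := rfl

/-! ### absVal lemmas -/

lemma st15_absVal_bdd (f : E →L[ℝ] ℝ) {y : E} (hy : 0 ≤ y) :
    ∀ z ∈ (fun z => f z) '' {z : E | |z| ≤ y}, z ≤ ‖f‖ * ‖y‖ := by
  rintro _ ⟨z, hz, rfl⟩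
  calc f z ≤ |f z| := le_abs_self _
    _ ≤ ‖f‖ * ‖z‖ := f.le_opNorm z
    _ ≤ ‖f‖ * ‖y‖ := by
        refine mul_le_mul_of_nonneg_left ?_ (norm_nonneg f)
        refine norm_le_norm_of_abs_le_abs ?_
        rwa [abs_of_nonneg hy]

lemma st15_absVal_bddAbove (f : E →L[ℝ] ℝ) {y : E} (hy : 0 ≤ y) :
    BddAbove ((fun z => f z) '' {z : E | |z| ≤ y}) :=
  ⟨‖f‖ * ‖y‖, fun z hz => st15_absVal_bdd f hy z hz⟩

lemma st15_mem_absVal_set (f : E →L[ℝ] ℝ) {y : E} (hy : 0 ≤ y) :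
    (0 : ℝ) ∈ (fun z => f z) '' {z : E | |z| ≤ y} :=
  ⟨0, by simpa using hy, by simp⟩

lemma st15_le_absVal (f : E →L[ℝ] ℝ) {y z : E} (hy : 0 ≤ y) (hz : |z| ≤ y) :
    f z ≤ absVal f y :=
  le_csSup (st15_absVal_bddAbove f hy) ⟨z, hz, rfl⟩

lemma st15_absVal_nonneg (f : E →L[ℝ] ℝ) {y : E} (hy : 0 ≤ y) : 0 ≤ absVal f y := by
  have := st15_le_absVal f hy (z := 0) (by simpa using hy)
  simpa using this

lemma st15_abs_le_absVal (f : E →L[ℝ] ℝ) {y z : E} (hy : 0 ≤ y) (hz : |z| ≤ y) :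
    |f z| ≤ absVal f y := by
  rw [abs_le]
  constructor
  · have h := st15_le_absVal f hy (z := -z) (by rwa [abs_neg])
    rw [map_neg] at h
    linarith
  · exact st15_le_absVal f hy hz

lemma st15_absVal_le (f : E →L[ℝ] ℝ) {y : E} (hy : 0 ≤ y) {c : ℝ}
    (hc : ∀ z : E, |z| ≤ y → f z ≤ c) : absVal f y ≤ c := by
  refine csSup_le ⟨0, st15_mem_absVal_set f hy⟩ ?_
  rintro _ ⟨z, hz, rfl⟩
  exact hc z hz

lemma st15_absVal_le_norm (f : E →L[ℝ] ℝ) {y : E} (hy : 0 ≤ y) :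
    absVal f y ≤ ‖f‖ * ‖y‖ :=
  csSup_le ⟨0, st15_mem_absVal_set f hy⟩ (st15_absVal_bdd f hy)

lemma st15_absVal_mono (f : E →L[ℝ] ℝ) {y y' : E} (hy : 0 ≤ y) (h : y ≤ y') :
    absVal f y ≤ absVal f y' :=
  st15_absVal_le f hy fun z hz => st15_le_absVal f (hy.trans h) (hz.trans h)

lemma st15_riesz {z y y' : E} (hy : 0 ≤ y) (hy' : 0 ≤ y') (hz : |z| ≤ y + y') :
    ∃ z₁ z₂ : E, z = z₁ + z₂ ∧ |z₁| ≤ y ∧ |z₂| ≤ y' := by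
  obtain ⟨hz1, hz2⟩ := abs_le'.mp hz
  refine ⟨(z ⊔ (-y)) ⊓ y, z - (z ⊔ (-y)) ⊓ y, by abel, ?_, ?_⟩
  · rw [abs_le']
    refine ⟨inf_le_right, ?_⟩
    rw [neg_le]
    exact le_inf le_sup_right ((neg_nonpos.mpr hy).trans hy)
  · rw [abs_le']
    constructor
    · have h1 : z ⊓ y ≤ (z ⊔ -y) ⊓ y := inf_le_inf_right y le_sup_left
      calc z - (z ⊔ -y) ⊓ y ≤ z - z ⊓ y := sub_le_sub_left h1 z
        _ = (z - z) ⊔ (z - y) := by rw [sub_inf]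
        _ ≤ y' := sup_le (by simpa using hy') (by
            rw [sub_le_iff_le_add, add_comm]; exact hz1)
    · rw [neg_sub]
      calc (z ⊔ -y) ⊓ y - z ≤ (z ⊔ -y) - z := sub_le_sub_right inf_le_left z
        _ = (z - z) ⊔ (-y - z) := by rw [sup_sub]
        _ ≤ y' := by
            refine sup_le (by simpa using hy') ?_
            calc -y - z = -z - y := by abel
              _ ≤ y' := by rw [sub_le_iff_le_add, add_comm]; exact hz2

lemma st15_absVal_add (f : E →L[ℝ] ℝ) {y y' : E} (hy : 0 ≤ y) (hy' : 0 ≤ y') :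
    absVal f (y + y') = absVal f y + absVal f y' := by
  have hyy' : 0 ≤ y + y' := add_nonneg hy hy'
  refine le_antisymm ?_ ?_
  · refine st15_absVal_le f hyy' fun z hz => ?_
    obtain ⟨z₁, z₂, rfl, h1, h2⟩ := st15_riesz hy hy' hz
    rw [map_add]
    exact add_le_add (st15_le_absVal f hy h1) (st15_le_absVal f hy' h2)
  · have key : ∀ z₁ : E, |z₁| ≤ y → ∀ z₂ : E, |z₂| ≤ y' → f z₁ + f z₂ ≤ absVal f (y + y') := by
      intro z₁ h1 z₂ h2
      have hm : f z₁ + f z₂ = f (z₁ + z₂) := (map_add f z₁ z₂).symm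
      rw [hm]
      exact st15_le_absVal f hyy' ((abs_add_le z₁ z₂).trans (add_le_add h1 h2))
    have h3 : ∀ z₁ : E, |z₁| ≤ y → absVal f y' ≤ absVal f (y + y') - f z₁ := by
      intro z₁ h1
      refine st15_absVal_le f hy' fun z₂ h2 => ?_
      rw [le_sub_iff_add_le, add_comm]
      exact key z₁ h1 z₂ h2
    have h4 : absVal f y ≤ absVal f (y + y') - absVal f y' := by
      refine st15_absVal_le f hy fun z₁ h1 => ?_
      have h5 := le_sub_iff_add_le.mp (h3 z₁ h1)
      rw [le_sub_iff_add_le, add_comm (f z₁) (absVal f y')]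
      exact h5
    linarith [h4]

end St15Aux


section St15Ros

open Set Filter

lemma st15_ros_aux (ν : ℕ → Set ℕ → ℝ) (C ε : ℝ) (hε : 0 < ε)
    (hmono : ∀ j (A B : Set ℕ), A ⊆ B → ν j A ≤ ν j B)
    (hadd : ∀ j (A B : Set ℕ), Disjoint A B → ν j (A ∪ B) = ν j A + ν j B)
    (hbdd : ∀ j A, ν j A ≤ C) :
    ∀ d n : ℕ, C < ((n + d : ℕ) : ℝ) * ε →
      ∀ σ : ℕ → ℕ, Function.Injective σ →
      ∀ H : ℕ → Set ℕ, Pairwise (Function.onFun Disjoint H) →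
      ∀ B : ℕ → Set ℕ, (∀ k, B k ⊆ H k) →
      (∀ k, (n : ℝ) * ε ≤ ν (σ k) (B k)) →
      ∃ S : Set ℕ, S.Infinite ∧ ∀ j ∈ S, ν (σ j) (⋃ m ∈ S \ {j}, H m) < ε := by
  intro d
  induction d with
  | zero =>
    intro n hC σ hσ H hH B hB hlow
    exfalso
    have h1 := hlow 0
    have h2 := hbdd (σ 0) (B 0)
    have h3 : ((n + 0 : ℕ) : ℝ) = (n : ℝ) := by push_cast; ring
    rw [h3] at hC
    linarith
  | succ d ih =>
    intro n hC σ hσinj H hH B hB hlow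
    classical
    set N : ℕ → Set ℕ := fun l => {m | (Nat.unpair m).1 = l} with hN
    have hNinf : ∀ l, (N l).Infinite := by
      intro l
      apply Set.infinite_of_injective_forall_mem (f := fun i : ℕ => Nat.pair l i)
      · intro i i' hii'
        simpa using congrArg (fun m => (Nat.unpair m).2) hii'
      · intro i
        simp [hN, Nat.unpair_pair]
    by_cases hcase : ∃ l, {j | j ∈ N l ∧ ν (σ j) (⋃ m ∈ N l \ {j}, H m) < ε}.Infinite
    · obtain ⟨l, hl⟩ := hcase
      refine ⟨_, hl, ?_⟩
      rintro j hj
      obtain ⟨hjN, hjν⟩ := hj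
      refine lt_of_le_of_lt (hmono _ _ _ ?_) hjν
      refine Set.biUnion_subset_biUnion_left ?_
      rintro m ⟨hm1, hm2⟩
      exact ⟨hm1.1, hm2⟩
    · push_neg at hcase
      have hfin : ∀ l, {j | j ∈ N l ∧ ν (σ j) (⋃ m ∈ N l \ {j}, H m) < ε}.Finite :=
        fun l => hcase l
      have hex : ∀ l, ∃ j, j ∈ N l ∧ ε ≤ ν (σ j) (⋃ m ∈ N l \ {j}, H m) := by
        intro l
        obtain ⟨j, hj⟩ := ((hNinf l).diff (hfin l)).nonempty
        refine ⟨j, hj.1, ?_⟩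
        by_contra hlt
        exact hj.2 ⟨hj.1, lt_of_not_ge hlt⟩
      choose jj hjjmem hjjν using hex
      have hjjinj : Function.Injective jj := by
        intro l l' hll'
        have h1 : (Nat.unpair (jj l)).1 = l := hjjmem l
        have h2 : (Nat.unpair (jj l')).1 = l' := hjjmem l'
        rw [hll'] at h1
        exact h1.symm.trans h2
      set H' : ℕ → Set ℕ := fun l => ⋃ m ∈ N l, H m with hH'
      set B' : ℕ → Set ℕ := fun l => B (jj l) ∪ ⋃ m ∈ N l \ {jj l}, H m with hB'
      have hH'disj : Pairwise (Function.onFun Disjoint H') := by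
        intro l l' hll'
        rw [Function.onFun, Set.disjoint_left]
        rintro ξ hξ hξ'
        rw [hH'] at hξ hξ'
        simp only [Set.mem_iUnion] at hξ hξ'
        obtain ⟨m, hm, hξm⟩ := hξ
        obtain ⟨m', hm', hξm'⟩ := hξ'
        have hmm' : m ≠ m' := by
          rintro rfl
          exact hll' ((hm.symm).trans hm')
        exact Set.disjoint_left.mp (hH hmm') hξm hξm'
      have hB'sub : ∀ l, B' l ⊆ H' l := by
        intro l
        rw [hB', hH']
        refine Set.union_subset ?_ ?_
        · exact (hB (jj l)).trans (Set.subset_biUnion_of_mem (hjjmem l))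
        · exact Set.biUnion_subset_biUnion_left (Set.diff_subset)
      have hdisjBU : ∀ l, Disjoint (B (jj l)) (⋃ m ∈ N l \ {jj l}, H m) := by
        intro l
        rw [Set.disjoint_left]
        intro ξ hξ hξ'
        simp only [Set.mem_iUnion] at hξ'
        obtain ⟨m, hm, hξm⟩ := hξ'
        have hne : jj l ≠ m := fun hrfl => hm.2 hrfl.symm
        exact Set.disjoint_left.mp (hH hne) (hB _ hξ) hξm
      have hlow' : ∀ l, ((n + 1 : ℕ) : ℝ) * ε ≤ ν ((σ ∘ jj) l) (B' l) := by
        intro l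
        have heq : ν (σ (jj l)) (B' l)
            = ν (σ (jj l)) (B (jj l)) + ν (σ (jj l)) (⋃ m ∈ N l \ {jj l}, H m) := by
          rw [hB']
          exact hadd _ _ _ (hdisjBU l)
        have h1 := hlow (jj l)
        have h2 := hjjν l
        have : ((n + 1 : ℕ) : ℝ) * ε = (n : ℝ) * ε + ε := by push_cast; ring
        rw [Function.comp_apply, heq, this]
        linarith
      have hC' : C < (((n + 1) + d : ℕ) : ℝ) * ε := by
        have : (((n + 1) + d : ℕ) : ℝ) = ((n + (d + 1) : ℕ) : ℝ) := by push_cast; ring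
        rw [this]
        exact hC
      obtain ⟨S', hS'inf, hS'⟩ := ih (n + 1) hC' (σ ∘ jj) (hσinj.comp hjjinj) H' hH'disj
        B' hB'sub hlow'
      refine ⟨jj '' S', hS'inf.image hjjinj.injOn, ?_⟩
      rintro _ ⟨l, hl, rfl⟩
      refine lt_of_le_of_lt (hmono _ _ _ ?_) (hS' l hl)
      intro ξ hξ
      simp only [Set.mem_iUnion] at hξ ⊢
      obtain ⟨m, hm, hξm⟩ := hξ
      obtain ⟨⟨l', hl', rfl⟩, hmne⟩ := hm
      have hl'ne : l' ≠ l := by rintro rfl; exact hmne rfl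
      refine ⟨l', ⟨hl', hl'ne⟩, ?_⟩
      rw [hH']
      simp only [Set.mem_iUnion]
      exact ⟨jj l', hjjmem l', hξm⟩

lemma st15_rosenthal (ν : ℕ → Set ℕ → ℝ) (C ε : ℝ) (hε : 0 < ε)
    (hmono : ∀ j (A B : Set ℕ), A ⊆ B → ν j A ≤ ν j B)
    (hadd : ∀ j (A B : Set ℕ), Disjoint A B → ν j (A ∪ B) = ν j A + ν j B)
    (hbdd : ∀ j A, ν j A ≤ C) :
    ∃ S : Set ℕ, S.Infinite ∧ ∀ j ∈ S, ν j (S \ {j}) < ε := by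
  classical
  have hempty : ∀ j, ν j ∅ = 0 := by
    intro j
    have h1 := hadd j ∅ ∅ (Set.disjoint_empty ∅)
    rw [Set.union_empty] at h1
    linarith
  obtain ⟨d, hd⟩ := exists_nat_gt (C / ε)
  have hC : C < ((0 + d : ℕ) : ℝ) * ε := by
    have h1 : C < (d : ℝ) * ε := by
      rw [← div_lt_iff₀ hε] at *
      exact lt_of_lt_of_le hd (le_of_eq (by ring))
    have : ((0 + d : ℕ) : ℝ) = (d : ℝ) := by push_cast; ring
    rw [this]
    exact h1
  obtain ⟨S, hSinf, hS⟩ := st15_ros_aux ν C ε hε hmono hadd hbdd d 0 hC id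
    Function.injective_id (fun m => {m})
    (by
      intro m m' hmm'
      exact Set.disjoint_singleton.mpr hmm')
    (fun _ => ∅) (fun _ => Set.empty_subset _)
    (by
      intro k
      rw [hempty]
      simp)
  refine ⟨S, hSinf, fun j hj => ?_⟩
  have hU : ⋃ m ∈ S \ {j}, ({m} : Set ℕ) = S \ {j} := by
    ext ξ
    simp only [Set.mem_iUnion, Set.mem_singleton_iff, Set.mem_diff, Set.mem_singleton_iff]
    constructor
    · rintro ⟨m, hm, rfl⟩
      exact hm
    · intro hξ
      exact ⟨ξ, hξ, rfl⟩
  have := hS j hj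
  rwa [hU] at this

end St15Ros


section St15Phil

open Set Filter
open scoped Classical

variable {E : Type*} [NormedAddCommGroup E] [Lattice E] [HasSolidNorm E] [IsOrderedAddMonoid E] [NormedSpace ℝ E]

noncomputable def st15_U (hσ : SigmaDedekindComplete E) (y : ℕ → E) (w : E)
    (h0 : ∀ i, 0 ≤ y i) (hsum : ∀ N : ℕ, ∑ i ∈ Finset.range N, y i ≤ w) (A : Set ℕ) : E :=
  st15_slub hσ (fun N => ∑ i ∈ Finset.range N, A.indicator y i)
    ⟨w, fun N => le_trans (Finset.sum_le_sum fun i _ => by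
      by_cases h : i ∈ A
      · rw [Set.indicator_of_mem h]
      · rw [Set.indicator_of_notMem h]; exact h0 i) (hsum N)⟩

variable (hσ : SigmaDedekindComplete E) (y : ℕ → E) (w : E)
  (h0 : ∀ i, 0 ≤ y i) (hsum : ∀ N : ℕ, ∑ i ∈ Finset.range N, y i ≤ w)

include h0 in
lemma st15_ind_nonneg (A : Set ℕ) (i : ℕ) : 0 ≤ A.indicator y i := by
  by_cases h : i ∈ A
  · rw [Set.indicator_of_mem h]; exact h0 i
  · rw [Set.indicator_of_notMem h]

include h0 in
lemma st15_ind_le_self (A : Set ℕ) (i : ℕ) : A.indicator y i ≤ y i := by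
  by_cases h : i ∈ A
  · rw [Set.indicator_of_mem h]
  · rw [Set.indicator_of_notMem h]; exact h0 i

lemma st15_U_isLUB (A : Set ℕ) :
    IsLUB (range fun N => ∑ i ∈ Finset.range N, A.indicator y i)
      (st15_U hσ y w h0 hsum A) :=
  st15_slub_isLUB hσ _ _

include h0 in
lemma st15_U_seq_mono (A : Set ℕ) :
    Monotone fun N => ∑ i ∈ Finset.range N, A.indicator y i := by
  intro N N' hNN'
  exact Finset.sum_le_sum_of_subset_of_nonneg (Finset.range_subset_range.mpr hNN')
    fun i _ _ => st15_ind_nonneg y h0 A i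

lemma st15_U_nonneg (A : Set ℕ) : 0 ≤ st15_U hσ y w h0 hsum A := by
  have h1 := (st15_U_isLUB hσ y w h0 hsum A).1 ⟨0, rfl⟩
  simpa using h1

lemma st15_U_le_w (A : Set ℕ) : st15_U hσ y w h0 hsum A ≤ w := by
  refine (st15_U_isLUB hσ y w h0 hsum A).2 ?_
  rintro _ ⟨N, rfl⟩
  exact le_trans (Finset.sum_le_sum fun i _ => st15_ind_le_self y h0 A i) (hsum N)

lemma st15_U_mono {A A' : Set ℕ} (hAA' : A ⊆ A') :
    st15_U hσ y w h0 hsum A ≤ st15_U hσ y w h0 hsum A' := by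
  refine (st15_U_isLUB hσ y w h0 hsum A).2 ?_
  rintro _ ⟨N, rfl⟩
  refine le_trans (Finset.sum_le_sum fun i _ => ?_)
    ((st15_U_isLUB hσ y w h0 hsum A').1 ⟨N, rfl⟩)
  by_cases h : i ∈ A
  · rw [Set.indicator_of_mem h, Set.indicator_of_mem (hAA' h)]
  · rw [Set.indicator_of_notMem h]
    exact st15_ind_nonneg y h0 A' i

lemma st15_U_add {A B : Set ℕ} (hAB : Disjoint A B) :
    st15_U hσ y w h0 hsum (A ∪ B) = st15_U hσ y w h0 hsum A + st15_U hσ y w h0 hsum B := by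
  refine (st15_U_isLUB hσ y w h0 hsum (A ∪ B)).unique ?_
  have hpt : (fun N => ∑ i ∈ Finset.range N, (A ∪ B).indicator y i)
      = fun N => (∑ i ∈ Finset.range N, A.indicator y i)
        + ∑ i ∈ Finset.range N, B.indicator y i := by
    funext N
    rw [← Finset.sum_add_distrib]
    refine Finset.sum_congr rfl fun i _ => ?_
    rw [Set.indicator_union_of_disjoint hAB]
  rw [hpt]
  exact st15_isLUB_add (st15_U_seq_mono y h0 A) (st15_U_seq_mono y h0 B)
    (st15_U_isLUB hσ y w h0 hsum A) (st15_U_isLUB hσ y w h0 hsum B)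

lemma st15_U_single (i : ℕ) : st15_U hσ y w h0 hsum {i} = y i := by
  classical
  refine (st15_U_isLUB hσ y w h0 hsum {i}).unique ?_
  have hpt : ∀ N, i ∈ Finset.range N →
      (∑ m ∈ Finset.range N, ({i} : Set ℕ).indicator y m) = y i := by
    intro N hN
    rw [Finset.sum_eq_single_of_mem i hN]
    · exact Set.indicator_of_mem rfl y
    · intro m _ hm
      exact Set.indicator_of_notMem (by simpa using hm) y
  have hpt0 : ∀ N, i ∉ Finset.range N →
      (∑ m ∈ Finset.range N, ({i} : Set ℕ).indicator y m) = 0 := by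
    intro N hN
    refine Finset.sum_eq_zero fun m hm => ?_
    refine Set.indicator_of_notMem ?_ y
    simp only [Set.mem_singleton_iff]
    rintro rfl
    exact hN hm
  constructor
  · rintro _ ⟨N, rfl⟩
    dsimp only
    by_cases h : i ∈ Finset.range N
    · exact le_of_eq (hpt N h)
    · rw [hpt0 N h]
      exact h0 i
  · intro c hc
    have hmem := hc ⟨i + 1, rfl⟩
    dsimp only at hmem
    rwa [hpt (i + 1) (Finset.self_mem_range_succ i)] at hmem

lemma st15_phil (hσ : SigmaDedekindComplete E) (φ : ℕ → E →L[ℝ] ℝ) (C : ℝ)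
    (hC : ∀ j, ‖φ j‖ ≤ C) (z : ℕ → E) (w : E) (hw : 0 ≤ w) (hzw : ∀ i, |z i| ≤ w)
    (hdis : ∀ i i', i ≠ i' → |z i| ⊓ |z i'| = 0)
    (hwn : ∀ v : E, Tendsto (fun j => φ j v) atTop (𝓝 0))
    (δ : ℝ) (hδ : 0 < δ) (hlow : ∀ i, δ ≤ φ i (z i)) : False := by
  classical
  set yp : ℕ → E := fun i => z i ⊔ 0 with hyp
  set yn : ℕ → E := fun i => -z i ⊔ 0 with hyn
  have hyp0 : ∀ i, 0 ≤ yp i := fun i => le_sup_right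
  have hyn0 : ∀ i, 0 ≤ yn i := fun i => le_sup_right
  have hypw : ∀ i, yp i ≤ w := fun i => (st15_pos_le_abs (z i)).trans (hzw i)
  have hynw : ∀ i, yn i ≤ w := fun i => (st15_neg_le_abs (z i)).trans (hzw i)
  have hypd : ∀ i j, i ≠ j → yp i ⊓ yp j = 0 := by
    intro i j hij
    refine le_antisymm ?_ (le_inf (hyp0 i) (hyp0 j))
    refine le_trans (inf_le_inf (st15_pos_le_abs (z i)) (st15_pos_le_abs (z j))) ?_
    rw [hdis i j hij]
  have hynd : ∀ i j, i ≠ j → yn i ⊓ yn j = 0 := by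
    intro i j hij
    refine le_antisymm ?_ (le_inf (hyn0 i) (hyn0 j))
    refine le_trans (inf_le_inf (st15_neg_le_abs (z i)) (st15_neg_le_abs (z j))) ?_
    rw [hdis i j hij]
  have hsump : ∀ N : ℕ, ∑ i ∈ Finset.range N, yp i ≤ w :=
    fun N => st15_sum_le hw (Finset.range N) yp hyp0 hypd hypw
  have hsumn : ∀ N : ℕ, ∑ i ∈ Finset.range N, yn i ≤ w :=
    fun N => st15_sum_le hw (Finset.range N) yn hyn0 hynd hynw
  set uu : Set ℕ → E := st15_U hσ yp w hyp0 hsump with huu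
  set vv : Set ℕ → E := st15_U hσ yn w hyn0 hsumn with hvv
  set zset : Set ℕ → E := fun A => uu A - vv A with hzset
  have huunn : ∀ A, 0 ≤ uu A := fun A => st15_U_nonneg hσ yp w hyp0 hsump A
  have hvvnn : ∀ A, 0 ≤ vv A := fun A => st15_U_nonneg hσ yn w hyn0 hsumn A
  set ν : ℕ → Set ℕ → ℝ := fun j A => absVal (φ j) (uu A + vv A) with hν
  have hνmono : ∀ j (A B : Set ℕ), A ⊆ B → ν j A ≤ ν j B := by
    intro j A B hAB
    refine st15_absVal_mono (φ j) (add_nonneg (huunn A) (hvvnn A)) ?_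
    exact add_le_add (st15_U_mono hσ yp w hyp0 hsump hAB) (st15_U_mono hσ yn w hyn0 hsumn hAB)
  have hνadd : ∀ j (A B : Set ℕ), Disjoint A B → ν j (A ∪ B) = ν j A + ν j B := by
    intro j A B hAB
    have h1 : uu (A ∪ B) + vv (A ∪ B) = (uu A + vv A) + (uu B + vv B) := by
      rw [huu, hvv, st15_U_add hσ yp w hyp0 hsump hAB, st15_U_add hσ yn w hyn0 hsumn hAB]
      abel
    rw [hν]
    simp only []
    rw [h1]
    exact st15_absVal_add (φ j) (add_nonneg (huunn A) (hvvnn A)) (add_nonneg (huunn B) (hvvnn B))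
  have hC0 : 0 ≤ C := le_trans (norm_nonneg (φ 0)) (hC 0)
  have hνbdd : ∀ j A, ν j A ≤ C * (2 * ‖w‖) := by
    intro j A
    have h1 : ν j A ≤ ‖φ j‖ * ‖uu A + vv A‖ :=
      st15_absVal_le_norm (φ j) (add_nonneg (huunn A) (hvvnn A))
    have h2 : ‖uu A + vv A‖ ≤ 2 * ‖w‖ := by
      have hu : ‖uu A‖ ≤ ‖w‖ := by
        refine norm_le_norm_of_abs_le_abs ?_
        rw [abs_of_nonneg (huunn A)]
        exact (st15_U_le_w hσ yp w hyp0 hsump A).trans (le_abs_self w)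
      have hv : ‖vv A‖ ≤ ‖w‖ := by
        refine norm_le_norm_of_abs_le_abs ?_
        rw [abs_of_nonneg (hvvnn A)]
        exact (st15_U_le_w hσ yn w hyn0 hsumn A).trans (le_abs_self w)
      calc ‖uu A + vv A‖ ≤ ‖uu A‖ + ‖vv A‖ := norm_add_le _ _
        _ ≤ 2 * ‖w‖ := by linarith
    calc ν j A ≤ ‖φ j‖ * ‖uu A + vv A‖ := h1
      _ ≤ C * ‖uu A + vv A‖ := mul_le_mul_of_nonneg_right (hC j) (norm_nonneg _)
      _ ≤ C * (2 * ‖w‖) := mul_le_mul_of_nonneg_left h2 hC0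
  obtain ⟨S, hSinf, hS⟩ := st15_rosenthal ν (C * (2 * ‖w‖)) (δ / 2) (half_pos hδ)
    hνmono hνadd hνbdd
  have hsplit : ∀ j ∈ S, zset S = z j + zset (S \ {j}) := by
    intro j hj
    have hSu : {j} ∪ (S \ {j}) = S := Set.union_diff_cancel (Set.singleton_subset_iff.mpr hj)
    have hd : Disjoint ({j} : Set ℕ) (S \ {j}) := disjoint_sdiff_self_right
    have h1 : uu S = yp j + uu (S \ {j}) := by
      rw [huu]
      conv_lhs => rw [← hSu]
      rw [st15_U_add hσ yp w hyp0 hsump hd, st15_U_single hσ yp w hyp0 hsump j]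
    have h2 : vv S = yn j + vv (S \ {j}) := by
      rw [hvv]
      conv_lhs => rw [← hSu]
      rw [st15_U_add hσ yn w hyn0 hsumn hd, st15_U_single hσ yn w hyn0 hsumn j]
    rw [hzset]
    simp only []
    rw [h1, h2]
    have h3 : yp j - yn j = z j := st15_pos_sub_neg (z j)
    rw [← h3]
    abel
  have hbig : ∀ j ∈ S, δ / 2 ≤ φ j (zset S) := by
    intro j hj
    have h1 : φ j (zset S) = φ j (z j) + φ j (zset (S \ {j})) := by
      rw [hsplit j hj, map_add]
    have h2 : |φ j (zset (S \ {j}))| ≤ ν j (S \ {j}) := by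
      refine st15_abs_le_absVal (φ j) (add_nonneg (huunn _) (hvvnn _)) ?_
      rw [hzset]
      simp only []
      calc |uu (S \ {j}) - vv (S \ {j})|
          = |uu (S \ {j}) + -vv (S \ {j})| := by rw [sub_eq_add_neg]
        _ ≤ |uu (S \ {j})| + |(-vv (S \ {j}))| := abs_add_le _ _
        _ = uu (S \ {j}) + vv (S \ {j}) := by
            rw [abs_neg, abs_of_nonneg (huunn _), abs_of_nonneg (hvvnn _)]
    have h3 := hS j hj
    have h4 := hlow j
    have h5 : -(δ / 2) ≤ φ j (zset (S \ {j})) := by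
      have := (abs_le.mp (le_of_lt (lt_of_le_of_lt h2 h3))).1
      linarith
    rw [h1]
    linarith
  obtain ⟨N, hN⟩ := Metric.tendsto_atTop.mp (hwn (zset S)) (δ / 2) (half_pos hδ)
  obtain ⟨j, hjS⟩ := ((hSinf.diff (Set.finite_lt_nat N)).nonempty)
  have hjN : N ≤ j := le_of_not_gt hjS.2
  have h6 := hN j hjN
  rw [Real.dist_eq, sub_zero] at h6
  have h7 := hbig j hjS.1
  have h8 : φ j (zset S) ≤ |φ j (zset S)| := le_abs_self _
  linarith

end St15Phil


/-- For a σ-Dedekind complete Banach lattice `E` with the wDP* property, every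
continuous linear operator `T : E → c₀` (encoded by its sequence of coordinate functionals
`T k`, weak*-null since `T x ∈ c₀`, with `‖T x‖ = ⨆ k, |T k x|`) is almost Dunford–Pettis. -/
theorem stmt15 {E : Type*} [NormedAddCommGroup E] [Lattice E] [HasSolidNorm E] [IsOrderedAddMonoid E] [NormedSpace ℝ E] [CompleteSpace E]
    (hσ : SigmaDedekindComplete E) (h : WDPStar E) (T : ℕ → E →L[ℝ] ℝ)
    (hT : ∀ x : E, Tendsto (fun k => T k x) atTop (𝓝 0)) :
    ∀ x : ℕ → E, Pairwise (fun m n => ElemDisjoint (x m) (x n)) → WeaklyNull x →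
      Tendsto (fun n => ⨆ k, |T k (x n)|) atTop (𝓝 0) := by
  classical
  intro x hdx hwx
  by_contra hnot
  -- uniform bound on the coordinate functionals
  obtain ⟨C, hC⟩ : ∃ C, ∀ k, ‖T k‖ ≤ C := by
    refine banach_steinhaus fun v => ?_
    obtain ⟨c, hc⟩ := ((hT v).norm).bddAbove_range
    exact ⟨c, fun k => hc ⟨k, rfl⟩⟩
  have hbddn : ∀ n, BddAbove (Set.range fun k => |T k (x n)|) := by
    intro n
    have h1 : Tendsto (fun k => |T k (x n)|) atTop (𝓝 |0|) := (hT (x n)).abs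
    exact h1.bddAbove_range
  have hsnn : ∀ n, (0:ℝ) ≤ ⨆ k, |T k (x n)| := fun n =>
    le_trans (abs_nonneg (T 0 (x n))) (le_ciSup (hbddn n) 0)
  rw [Metric.tendsto_atTop] at hnot
  push_neg at hnot
  obtain ⟨ε, hε, hfreq⟩ := hnot
  have hfreq' : ∃ᶠ n in atTop, ε ≤ ⨆ k, |T k (x n)| := by
    rw [Filter.frequently_atTop]
    intro N
    obtain ⟨n, hn1, hn2⟩ := hfreq N
    refine ⟨n, hn1, ?_⟩
    rwa [Real.dist_eq, sub_zero, abs_of_nonneg (hsnn n)] at hn2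
  -- extraction of a strictly increasing pair sequence
  have hstep : ∀ p : ℕ × ℕ, ∃ q : ℕ × ℕ, p.1 < q.1 ∧ p.2 < q.2 ∧ ε/2 < |T q.2 (x q.1)| := by
    intro p
    have hev : ∀ᶠ m in atTop, ∀ k ∈ Finset.range (p.2+1), |T k (x m)| < ε/2 := by
      rw [Filter.eventually_all_finset]
      intro k _
      have h1 : Tendsto (fun m => |T k (x m)|) atTop (𝓝 0) := by
        simpa using (hwx (T k)).abs
      exact h1.eventually_lt_const (half_pos hε)
    have hev2 : ∀ᶠ m in atTop, p.1 < m := Filter.eventually_gt_atTop p.1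
    obtain ⟨m, hm1, hm2, hm3⟩ := (hfreq'.and_eventually (hev.and hev2)).exists
    have h2 : ε/2 < ⨆ k, |T k (x m)| := lt_of_lt_of_le (half_lt_self hε) hm1
    obtain ⟨k, hk⟩ := (lt_ciSup_iff (hbddn m)).mp h2
    have hk2 : p.2 < k := by
      by_contra hle
      have : k ∈ Finset.range (p.2+1) := Finset.mem_range.mpr (by omega)
      exact absurd hk (not_lt.mpr (le_of_lt (hm2 k this)))
    exact ⟨(m, k), hm3, hk2, hk⟩
  choose step hstep1 hstep2 hstep3 using hstep
  set g : ℕ → ℕ × ℕ := fun j => Nat.rec (step (0,0)) (fun _ p => step p) j with hg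
  have hgs : ∀ j, g (j+1) = step (g j) := fun j => rfl
  set n : ℕ → ℕ := fun j => (g j).1 with hn
  set kk : ℕ → ℕ := fun j => (g j).2 with hkk
  have hnmono : StrictMono n := by
    refine strictMono_nat_of_lt_succ fun j => ?_
    rw [hn]
    simp only [hgs j]
    exact hstep1 (g j)
  have hkmono : StrictMono kk := by
    refine strictMono_nat_of_lt_succ fun j => ?_
    rw [hkk]
    simp only [hgs j]
    exact hstep2 (g j)
  have hbig : ∀ j, ε/2 < |T (kk j) (x (n j))| := by
    intro j
    cases j with
    | zero => exact hstep3 (0,0)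
    | succ j => exact hstep3 (g j)
  -- the band projections associated to the disjoint sequence
  set w : ℕ → E := fun j => |x (n j)| with hw
  have hw0 : ∀ j, 0 ≤ w j := fun j => abs_nonneg _
  have hwd : ∀ i i', i ≠ i' → w i ⊓ w i' = 0 := fun i i' hii' =>
    hdx (hnmono.injective.ne hii')
  set f : ℕ → E →L[ℝ] ℝ := fun j => (T (kk j)).comp (st15_Pclm hσ (w j) (hw0 j)) with hf
  have hfapply : ∀ j v, f j v = T (kk j) (st15_P hσ (w j) v) := fun j v => rfl
  have hfix : ∀ j, f j (x (n j)) = T (kk j) (x (n j)) := by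
    intro j
    rw [hfapply, st15_P_fix hσ (st15_pos_le_abs _) (st15_neg_le_abs _)]
  -- pairwise disjointness of the functionals
  have hfd : Pairwise fun i i' => FunDisjoint (f i) (f i') := by
    intro i i' hii'
    intro ξ hξ
    have hQnn : 0 ≤ st15_Q hσ (w i) ξ := st15_Q_nonneg hσ _ hξ
    have hQle : st15_Q hσ (w i) ξ ≤ ξ := st15_Q_le_self hσ _ _
    set y0 : E := ξ - st15_Q hσ (w i) ξ with hy0
    have hy0n : 0 ≤ y0 := sub_nonneg.mpr hQle
    have hy0le : y0 ≤ ξ := sub_le_self _ hQnn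
    have hval1 : absVal (f i) y0 = 0 := by
      refine le_antisymm (st15_absVal_le (f i) hy0n fun ζ hζ => ?_)
        (st15_absVal_nonneg _ hy0n)
      have hQy0 : st15_Q hσ (w i) y0 = 0 := st15_Q_comp_zero hσ (hw0 i) hξ
      have hz1 : st15_Q hσ (w i) (ζ ⊔ 0) = 0 := by
        refine le_antisymm ?_ (st15_Q_nonneg hσ _ le_sup_right)
        calc st15_Q hσ (w i) (ζ ⊔ 0) ≤ st15_Q hσ (w i) y0 :=
              st15_Q_mono hσ _ ((st15_pos_le_abs ζ).trans hζ)
          _ = 0 := hQy0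
      have hz2 : st15_Q hσ (w i) (-ζ ⊔ 0) = 0 := by
        refine le_antisymm ?_ (st15_Q_nonneg hσ _ le_sup_right)
        calc st15_Q hσ (w i) (-ζ ⊔ 0) ≤ st15_Q hσ (w i) y0 :=
              st15_Q_mono hσ _ ((st15_neg_le_abs ζ).trans hζ)
          _ = 0 := hQy0
      rw [hfapply, st15_P_zero hσ (hw0 i) hz1 hz2, map_zero]
    have hval2 : absVal (f i') (ξ - y0) = 0 := by
      have hxy : ξ - y0 = st15_Q hσ (w i) ξ := by rw [hy0, sub_sub_cancel]
      rw [hxy]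
      refine le_antisymm (st15_absVal_le _ hQnn fun ζ hζ => ?_)
        (st15_absVal_nonneg _ hQnn)
      have hQQ : st15_Q hσ (w i') (st15_Q hσ (w i) ξ) = 0 :=
        st15_Q_QQ_zero hσ (hw0 i) (hw0 i') hξ (hwd i i' hii')
      have hz1 : st15_Q hσ (w i') (ζ ⊔ 0) = 0 := by
        refine le_antisymm ?_ (st15_Q_nonneg hσ _ le_sup_right)
        calc st15_Q hσ (w i') (ζ ⊔ 0) ≤ st15_Q hσ (w i') (st15_Q hσ (w i) ξ) :=
              st15_Q_mono hσ _ ((st15_pos_le_abs ζ).trans hζ)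
          _ = 0 := hQQ
      have hz2 : st15_Q hσ (w i') (-ζ ⊔ 0) = 0 := by
        refine le_antisymm ?_ (st15_Q_nonneg hσ _ le_sup_right)
        calc st15_Q hσ (w i') (-ζ ⊔ 0) ≤ st15_Q hσ (w i') (st15_Q hσ (w i) ξ) :=
              st15_Q_mono hσ _ ((st15_neg_le_abs ζ).trans hζ)
          _ = 0 := hQQ
      rw [hfapply, st15_P_zero hσ (hw0 i') hz1 hz2, map_zero]
    have hlb : ∀ r ∈ (fun y => absVal (f i) y + absVal (f i') (ξ - y)) ''
        {y : E | 0 ≤ y ∧ y ≤ ξ}, (0:ℝ) ≤ r := by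
      rintro _ ⟨y', ⟨hy1, hy2⟩, rfl⟩
      exact add_nonneg (st15_absVal_nonneg _ hy1)
        (st15_absVal_nonneg _ (sub_nonneg.mpr hy2))
    have hmem : (0:ℝ) ∈ (fun y => absVal (f i) y + absVal (f i') (ξ - y)) ''
        {y : E | 0 ≤ y ∧ y ≤ ξ} :=
      ⟨y0, ⟨hy0n, hy0le⟩, by dsimp only; rw [hval1, hval2, add_zero]⟩
    exact le_antisymm (csInf_le ⟨0, hlb⟩ hmem) (le_csInf ⟨0, hmem⟩ hlb)
  -- the functionals are weak*-null
  have hwsn : WeakStarNull f := by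
    intro v
    by_contra hny
    rw [Metric.tendsto_atTop] at hny
    push_neg at hny
    obtain ⟨δ, hδ, hfr⟩ := hny
    have hfr' : ∃ᶠ j in atTop, δ ≤ |f j v| := by
      rw [Filter.frequently_atTop]
      intro N
      obtain ⟨j, hj1, hj2⟩ := hfr N
      exact ⟨j, hj1, by rwa [Real.dist_eq, sub_zero] at hj2⟩
    obtain ⟨gg, hggmono, hgg⟩ := Filter.extraction_of_frequently_atTop hfr'
    set zz : ℕ → E := fun i => if 0 ≤ f (gg i) v then st15_P hσ (w (gg i)) v
      else -(st15_P hσ (w (gg i)) v) with hzz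
    have habs : ∀ i, |zz i| = |st15_P hσ (w (gg i)) v| := by
      intro i
      by_cases hcs : 0 ≤ f (gg i) v
      · rw [hzz]; simp only [if_pos hcs]
      · rw [hzz]; simp only [if_neg hcs, abs_neg]
    refine st15_phil hσ (fun i => T (kk (gg i))) C (fun i => hC _) zz |v|
      (abs_nonneg v) (fun i => by rw [habs]; exact st15_abs_P_le hσ _ v)
      ?_ ?_ δ hδ ?_
    · intro i i' hii'
      rw [habs, habs]
      have h1 : |st15_P hσ (w (gg i)) v| ≤ st15_Q hσ (w (gg i)) |v| :=
        st15_P_le_Qabs hσ _ v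
      have h2 : |st15_P hσ (w (gg i')) v| ≤ st15_Q hσ (w (gg i')) |v| :=
        st15_P_le_Qabs hσ _ v
      refine le_antisymm (le_trans (inf_le_inf h1 h2) ?_)
        (le_inf (abs_nonneg _) (abs_nonneg _))
      rw [st15_Q_inf_Q hσ (hw0 _) (hw0 _) (abs_nonneg v) (abs_nonneg v)
        (hwd _ _ (hggmono.injective.ne hii'))]
    · intro u
      exact (hT u).comp ((hkmono.comp hggmono).tendsto_atTop)
    · intro i
      have hgi := hgg i
      by_cases hcs : 0 ≤ f (gg i) v
      · rw [hzz]
        simp only [if_pos hcs]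
        rw [← hfapply]
        rwa [abs_of_nonneg hcs] at hgi
      · rw [hzz]
        simp only [if_neg hcs]
        rw [map_neg, ← hfapply]
        rwa [abs_of_neg (lt_of_not_ge hcs)] at hgi
  -- apply the wDP* property and contradict hbig
  have hmain := h (fun j => x (n j)) f
    (fun φ => (hwx φ).comp (hnmono.tendsto_atTop)) hfd hwsn
  have habs0 : Tendsto (fun j => |f j (x (n j))|) atTop (𝓝 0) := by
    simpa using hmain.abs
  obtain ⟨j, hj⟩ := (habs0.eventually_lt_const (half_pos hε)).exists
  rw [hfix] at hj
  exact absurd hj (not_lt.mpr (le_of_lt (hbig j)))
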